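/- If f : (0,∞) → (0,∞) is operator monotone decreasing on positive definite matrices, then for all positive definite matrices A, B and all t ∈ [0,1], f((1-t)A + tB) ≤ f(A) !_t f(B), where X !_t Y = ((1-t)X⁻¹ + tY⁻¹)⁻¹ is the weighted harmonic mean. -/

import Mathlib

open scoped ComplexOrder Kronecker

/-- Matrix power via the continuous functional calculus. -/
noncomputable def mpow {n : Type*} [Fintype n] [DecidableEq n]
    (A : Matrix n n ℂ) (p : ℝ) : Matrix n n ℂ :=
  cfc (fun x : ℝ => x ^ p) A

/-- The Loewner order on matrices. -/
def LoewnerLE {n : Type*} [Fintype n] (A B : Matrix n n ℂ) : Prop :=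
  (B - A).PosSemidef

/-- The matrix geometric mean `A # B = A^{1/2}(A^{-1/2} B A^{-1/2})^{1/2} A^{1/2}`. -/
noncomputable def geo {n : Type*} [Fintype n] [DecidableEq n]
    (A B : Matrix n n ℂ) : Matrix n n ℂ :=
  mpow A (1/2) * mpow (mpow A (-(1/2)) * B * mpow A (-(1/2))) (1/2) * mpow A (1/2)

/-- The generalized Kantorovich constant. -/
noncomputable def Kconst (h p : ℝ) : ℝ :=
  ((h ^ p - h) / ((p - 1) * (h - 1))) *
    (((p - 1) / p) * ((h ^ p - 1) / (h ^ p - h))) ^ p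

/-- The Specht ratio. -/
noncomputable def Specht (h : ℝ) : ℝ :=
  if h = 1 then 1 else (h - 1) * h ^ (1 / (h - 1)) / (Real.exp 1 * Real.log h)


section OMDHelpers

open Matrix Polynomial
open scoped ComplexOrder

namespace OMD

variable {ι κ : Type*} [Fintype ι] [DecidableEq ι] [Fintype κ] [DecidableEq κ]

/-- Eigendecomposition witness. -/
def IsED (A U : Matrix ι ι ℂ) (d : ι → ℝ) : Prop :=
  U ∈ Matrix.unitaryGroup ι ℂ ∧ A = U * Matrix.diagonal (fun i => (d i : ℂ)) * Uᴴ

lemma IsED.isHermitian {A U : Matrix ι ι ℂ} {d : ι → ℝ} (h : IsED A U d) :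
    A.IsHermitian := by
  rcases h with ⟨hU, rfl⟩
  unfold Matrix.IsHermitian
  rw [conjTranspose_mul, conjTranspose_mul, conjTranspose_conjTranspose,
    diagonal_conjTranspose, mul_assoc]
  congr 2
  ext i j
  simp [Matrix.diagonal, Pi.star_def]

lemma isED_of_isHermitian {A : Matrix ι ι ℂ} (hA : A.IsHermitian) :
    IsED A (hA.eigenvectorUnitary : Matrix ι ι ℂ) hA.eigenvalues := by
  refine ⟨(hA.eigenvectorUnitary).2, ?_⟩
  conv_lhs => rw [hA.spectral_theorem]
  rfl

lemma IsED.spectrum_eq {A U : Matrix ι ι ℂ} {d : ι → ℝ} (h : IsED A U d) :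
    spectrum ℝ A = Set.range d := by
  obtain ⟨hU, hA⟩ := h
  let u : unitary (Matrix ι ι ℂ) := ⟨U, hU⟩
  have hstar : (↑(star u) : Matrix ι ι ℂ) = Uᴴ := by
    rw [Unitary.coe_star, ← Matrix.star_eq_conjTranspose]
  have hA' : A = (↑u : Matrix ι ι ℂ) * Matrix.diagonal (fun i => (d i : ℂ))
      * (↑(star u) : Matrix ι ι ℂ) := by
    rw [hA, hstar]
  rw [hA', Unitary.coe_star, Unitary.spectrum_star_right_conjugate]
  ext x
  rw [← spectrum.algebraMap_mem_iff ℂ, spectrum_diagonal]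
  constructor
  · rintro ⟨i, hi⟩
    exact ⟨i, Complex.ofReal_inj.mp (by simpa using hi)⟩
  · rintro ⟨i, hi⟩
    refine ⟨i, ?_⟩
    show ((d i : ℂ)) = algebraMap ℝ ℂ x
    simp [hi]

/-- Conjugation by a unitary as an `ℝ`-algebra homomorphism. -/
noncomputable def conjAH {U : Matrix ι ι ℂ} (hU : U ∈ Matrix.unitaryGroup ι ℂ) :
    Matrix ι ι ℂ →ₐ[ℝ] Matrix ι ι ℂ where
  toFun X := U * X * Uᴴ
  map_one' := by
    show U * 1 * Uᴴ = 1
    rw [mul_one, ← Matrix.star_eq_conjTranspose]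
    exact Matrix.mem_unitaryGroup_iff.mp hU
  map_mul' X Y := by
    show U * (X * Y) * Uᴴ = (U * X * Uᴴ) * (U * Y * Uᴴ)
    have h1 : Uᴴ * U = 1 := by
      rw [← Matrix.star_eq_conjTranspose]
      exact Matrix.mem_unitaryGroup_iff'.mp hU
    calc U * (X * Y) * Uᴴ = U * X * (Uᴴ * U) * Y * Uᴴ := by rw [h1, mul_one]; noncomm_ring
      _ = (U * X * Uᴴ) * (U * Y * Uᴴ) := by noncomm_ring
  map_zero' := by
    show U * 0 * Uᴴ = 0
    simp
  map_add' X Y := by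
    show U * (X + Y) * Uᴴ = U * X * Uᴴ + U * Y * Uᴴ
    noncomm_ring
  commutes' r := by
    show U * (algebraMap ℝ (Matrix ι ι ℂ) r) * Uᴴ = algebraMap ℝ (Matrix ι ι ℂ) r
    have h2 : U * Uᴴ = 1 := by
      rw [← Matrix.star_eq_conjTranspose]
      exact Matrix.mem_unitaryGroup_iff.mp hU
    rw [Algebra.algebraMap_eq_smul_one, Matrix.mul_smul, mul_one, Matrix.smul_mul, h2]

lemma IsED.aeval_eq {A U : Matrix ι ι ℂ} {d : ι → ℝ} (h : IsED A U d) (p : ℝ[X]) :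
    aeval A p = U * Matrix.diagonal (fun i => ((p.eval (d i) : ℝ) : ℂ)) * Uᴴ := by
  rcases h with ⟨hU, rfl⟩
  have h1 : U * Matrix.diagonal (fun i => (d i : ℂ)) * Uᴴ
      = conjAH hU ((Matrix.diagonalAlgHom ℝ) (fun i => (d i : ℂ))) := rfl
  rw [h1, aeval_algHom_apply, aeval_algHom_apply]
  have h2 : (aeval (fun i => (d i : ℂ)) p) = fun i => ((p.eval (d i) : ℝ) : ℂ) := by
    funext i
    show (aeval (fun j => ((d j : ℂ))) p) i = ((p.eval (d i) : ℝ) : ℂ)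
    have h3 : (aeval (fun j => ((d j : ℂ))) p) i = aeval ((d i : ℂ)) p :=
      (aeval_algHom_apply (Pi.evalAlgHom ℝ (fun _ : ι => ℂ) i)
        (fun j => ((d j : ℂ))) p).symm
    have h4 : aeval ((d i : ℂ)) p = ((p.eval (d i) : ℝ) : ℂ) := by
      have h5 := aeval_algebraMap_apply_eq_algebraMap_eval (A := ℂ) (d i) p
      simpa using h5
    exact h3.trans h4
  rw [h2]
  rfl

/-- The continuous functional calculus through any eigendecomposition. -/
lemma IsED.cfc_eq {A U : Matrix ι ι ℂ} {d : ι → ℝ} (h : IsED A U d) (f : ℝ → ℝ) :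
    cfc f A = U * Matrix.diagonal (fun i => ((f (d i) : ℝ) : ℂ)) * Uᴴ := by
  have hH := h.isHermitian
  have hcan := isED_of_isHermitian hH
  have hs : spectrum ℝ A = Set.range d := h.spectrum_eq
  classical
  have hfin : (spectrum ℝ A).Finite := A.finite_real_spectrum
  set p : ℝ[X] := Lagrange.interpolate hfin.toFinset id f with hp
  have hpe : ∀ x ∈ spectrum ℝ A, p.eval x = f x := by
    intro x hx
    have hx' : x ∈ hfin.toFinset := hfin.mem_toFinset.mpr hx
    exact Lagrange.eval_interpolate_at_node f (Set.injOn_id _) hx'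
  have e1 : cfc f A = aeval A p := by
    have hfg : (RCLike.ofReal (K := ℂ) ∘ f ∘ hH.eigenvalues)
        = fun i => ((p.eval (hH.eigenvalues i) : ℝ) : ℂ) := by
      funext i
      show ((f (hH.eigenvalues i) : ℝ) : ℂ) = _
      exact_mod_cast (hpe _ (hH.eigenvalues_mem_spectrum_real i)).symm
    rw [hcan.aeval_eq p, Matrix.IsHermitian.cfc_eq hH, Matrix.IsHermitian.cfc,
      Unitary.conjStarAlgAut_apply, Matrix.star_eq_conjTranspose, hfg]
  rw [e1, h.aeval_eq p]
  have hfg2 : (fun i => ((p.eval (d i) : ℝ) : ℂ)) = fun i => ((f (d i) : ℝ) : ℂ) := by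
    funext i
    exact_mod_cast congrArg (fun x : ℝ => (x : ℂ)) (hpe _ (hs ▸ Set.mem_range_self i))
  rw [hfg2]


lemma rsmul (r : ℝ) (X : Matrix ι ι ℂ) : r • X = (r : ℂ) • X := by
  ext i j
  simp [Complex.real_smul]

lemma IsED.cfc {A U : Matrix ι ι ℂ} {d : ι → ℝ} (h : IsED A U d) (f : ℝ → ℝ) :
    IsED (cfc f A) U (f ∘ d) :=
  ⟨h.1, by rw [h.cfc_eq f]; rfl⟩


lemma IsED.UUH {A U : Matrix ι ι ℂ} {d : ι → ℝ} (h : IsED A U d) : U * Uᴴ = 1 := by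
  rw [← Matrix.star_eq_conjTranspose]; exact Matrix.mem_unitaryGroup_iff.mp h.1

lemma IsED.UHU {A U : Matrix ι ι ℂ} {d : ι → ℝ} (h : IsED A U d) : Uᴴ * U = 1 := by
  rw [← Matrix.star_eq_conjTranspose]; exact Matrix.mem_unitaryGroup_iff'.mp h.1

lemma ed_one_of_unitary {V : Matrix ι ι ℂ} (hV : V ∈ Matrix.unitaryGroup ι ℂ) :
    IsED (1 : Matrix ι ι ℂ) V (fun _ => 1) := by
  refine ⟨hV, ?_⟩
  have : (Matrix.diagonal fun _ : ι => ((1 : ℝ) : ℂ)) = 1 := by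
    rw [show (fun _ : ι => ((1:ℝ):ℂ)) = fun _ : ι => (1:ℂ) by norm_num, diagonal_one]
  rw [this, mul_one, ← Matrix.star_eq_conjTranspose,
    (Matrix.mem_unitaryGroup_iff.mp hV).symm]

lemma ed_eq_one {A U : Matrix ι ι ℂ} {d : ι → ℝ} (h : IsED A U d)
    (hd : ∀ i, d i = 1) : A = 1 := by
  have h2 := ed_one_of_unitary h.1
  rw [h.2, h2.2]
  have : (fun i => ((d i : ℝ) : ℂ)) = fun _ : ι => ((1 : ℝ) : ℂ) := by
    funext i
    rw [hd i]
  rw [this]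

lemma IsED.mul {A B U : Matrix ι ι ℂ} {d e : ι → ℝ} (hA : IsED A U d) (hB : IsED B U e) :
    IsED (A * B) U (d * e) := by
  refine ⟨hA.1, ?_⟩
  have hUU : Uᴴ * U = 1 := by
    rw [← Matrix.star_eq_conjTranspose]; exact Matrix.mem_unitaryGroup_iff'.mp hA.1
  rw [hA.2, hB.2]
  calc (U * diagonal (fun i => (d i : ℂ)) * Uᴴ) * (U * diagonal (fun i => (e i : ℂ)) * Uᴴ)
      = U * (diagonal (fun i => (d i : ℂ)) * (Uᴴ * U) * diagonal (fun i => (e i : ℂ))) * Uᴴ := by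
        noncomm_ring
    _ = U * diagonal (fun i => ((d * e) i : ℂ)) * Uᴴ := by
        rw [hUU, mul_one, diagonal_mul_diagonal]
        have : (fun i => ((d i : ℝ) : ℂ) * ((e i : ℝ) : ℂ)) = fun i => (((d * e) i : ℝ) : ℂ) := by
          funext i
          rw [Pi.mul_apply]
          push_cast
          ring
        rw [this]

lemma IsED.sub {A B U : Matrix ι ι ℂ} {d e : ι → ℝ} (hA : IsED A U d) (hB : IsED B U e) :
    IsED (A - B) U (d - e) := by
  refine ⟨hA.1, ?_⟩
  rw [hA.2, hB.2, ← Matrix.sub_mul, ← Matrix.mul_sub, diagonal_sub]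
  have : (fun i => ((d i : ℝ) : ℂ) - ((e i : ℝ) : ℂ)) = fun i => (((d - e) i : ℝ) : ℂ) := by
    funext i
    rw [Pi.sub_apply]
    push_cast
    ring
  rw [← this]

lemma IsED.add {A B U : Matrix ι ι ℂ} {d e : ι → ℝ} (hA : IsED A U d) (hB : IsED B U e) :
    IsED (A + B) U (d + e) := by
  refine ⟨hA.1, ?_⟩
  rw [hA.2, hB.2, ← Matrix.add_mul, ← Matrix.mul_add, diagonal_add]
  have : (fun i => ((d i : ℝ) : ℂ) + ((e i : ℝ) : ℂ)) = fun i => (((d + e) i : ℝ) : ℂ) := by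
    funext i
    rw [Pi.add_apply]
    push_cast
    ring
  rw [← this]

lemma IsED.smul {A U : Matrix ι ι ℂ} {d : ι → ℝ} (hA : IsED A U d) (r : ℝ) :
    IsED (r • A) U (r • d) := by
  refine ⟨hA.1, ?_⟩
  have hfun : (fun i => (((r • d) i : ℝ) : ℂ)) = (r : ℂ) • fun i => ((d i : ℝ) : ℂ) := by
    funext i
    simp [Complex.real_smul]
  rw [hA.2, rsmul, hfun, diagonal_smul, Matrix.mul_smul, Matrix.smul_mul]

lemma IsED.conjU {X W V : Matrix ι ι ℂ} {d : ι → ℝ} (h : IsED X W d)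
    (hV : V ∈ Matrix.unitaryGroup ι ℂ) : IsED (V * X * Vᴴ) (V * W) d := by
  refine ⟨mul_mem hV h.1, ?_⟩
  rw [h.2, conjTranspose_mul]
  noncomm_ring

lemma IsED.fromBlocks {A U : Matrix ι ι ℂ} {d : ι → ℝ} {B V : Matrix κ κ ℂ} {e : κ → ℝ}
    (hA : IsED A U d) (hB : IsED B V e) :
    IsED (Matrix.fromBlocks A 0 0 B) (Matrix.fromBlocks U 0 0 V) (Sum.elim d e) := by
  constructor
  · rw [Matrix.mem_unitaryGroup_iff, Matrix.star_eq_conjTranspose, fromBlocks_conjTranspose,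
      fromBlocks_multiply]
    have h1 : U * Uᴴ = 1 := by
      rw [← Matrix.star_eq_conjTranspose]; exact Matrix.mem_unitaryGroup_iff.mp hA.1
    have h2 : V * Vᴴ = 1 := by
      rw [← Matrix.star_eq_conjTranspose]; exact Matrix.mem_unitaryGroup_iff.mp hB.1
    simp [h1, h2, Matrix.fromBlocks_one]
  · have : (fun k => ((Sum.elim d e k : ℝ) : ℂ))
        = Sum.elim (fun i => ((d i : ℝ) : ℂ)) (fun j => ((e j : ℝ) : ℂ)) := by
      funext k; cases k <;> rfl
    rw [this, ← Matrix.fromBlocks_diagonal, fromBlocks_conjTranspose, fromBlocks_multiply,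
      fromBlocks_multiply, hA.2, hB.2]
    simp [Matrix.mul_assoc]

lemma IsED.reindex {A U : Matrix ι ι ℂ} {d : ι → ℝ} (h : IsED A U d) (e : ι ≃ κ) :
    IsED (Matrix.reindex e e A) (Matrix.reindex e e U) (d ∘ e.symm) := by
  constructor
  · rw [Matrix.mem_unitaryGroup_iff, Matrix.star_eq_conjTranspose]
    simp only [Matrix.reindex_apply]
    rw [conjTranspose_submatrix, Matrix.submatrix_mul_equiv, h.UUH,
      Matrix.submatrix_one_equiv]
  · simp only [Matrix.reindex_apply]
    have hdiag : (Matrix.diagonal fun i => (((d ∘ ⇑e.symm) i : ℝ) : ℂ)) =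
        (Matrix.diagonal fun i => ((d i : ℝ) : ℂ)).submatrix ⇑e.symm ⇑e.symm := by
      rw [Matrix.submatrix_diagonal_equiv]
      rfl
    rw [h.2, hdiag, conjTranspose_submatrix, Matrix.submatrix_mul_equiv,
      Matrix.submatrix_mul_equiv]

lemma psd_conj {X : Matrix ι ι ℂ} (hX : X.PosSemidef) (C : Matrix ι ι ℂ) :
    (Cᴴ * X * C).PosSemidef :=
  hX.conjTranspose_mul_mul_same C

lemma pd_conj {X C Ci : Matrix ι ι ℂ} (hX : X.PosDef) (hCi : Ci * C = 1) :
    (Cᴴ * X * C).PosDef := by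
  refine Matrix.PosDef.of_dotProduct_mulVec_pos ?_ ?_
  · have := hX.isHermitian
    unfold Matrix.IsHermitian at this ⊢
    rw [conjTranspose_mul, conjTranspose_mul, conjTranspose_conjTranspose, this, mul_assoc]
  · intro x hx
    have hy : C *ᵥ x ≠ 0 := by
      intro hy0
      apply hx
      have : Ci *ᵥ (C *ᵥ x) = x := by rw [mulVec_mulVec, hCi, one_mulVec]
      rw [hy0, mulVec_zero] at this
      exact this.symm
    have := hX.dotProduct_mulVec_pos hy
    simpa only [star_mulVec, dotProduct_mulVec, vecMul_vecMul, Matrix.mul_assoc] using this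

lemma ed_psd_iff {A U : Matrix ι ι ℂ} {d : ι → ℝ} (h : IsED A U d) :
    A.PosSemidef ↔ ∀ i, 0 ≤ d i := by
  have hUU' : Uᴴ * U = 1 := by
    rw [← Matrix.star_eq_conjTranspose]; exact Matrix.mem_unitaryGroup_iff'.mp h.1
  constructor
  · intro hA
    have h2 := psd_conj hA U
    rw [h.2] at h2
    have h3 : Uᴴ * (U * diagonal (fun i => (d i : ℂ)) * Uᴴ) * U
        = diagonal (fun i => (d i : ℂ)) := by
      calc Uᴴ * (U * diagonal (fun i => (d i : ℂ)) * Uᴴ) * U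
          = (Uᴴ * U) * diagonal (fun i => (d i : ℂ)) * (Uᴴ * U) := by noncomm_ring
        _ = diagonal (fun i => (d i : ℂ)) := by rw [hUU']; simp
    rw [h3] at h2
    intro i
    have := (Matrix.posSemidef_diagonal_iff.mp h2) i
    exact_mod_cast this
  · intro hd
    rw [h.2]
    have hd' : (0 : ι → ℂ) ≤ fun i => ((d i : ℝ) : ℂ) := by
      rw [Pi.le_def]
      intro i
      show (0 : ℂ) ≤ ((d i : ℝ) : ℂ)
      exact_mod_cast hd i
    exact (Matrix.PosSemidef.diagonal hd').mul_mul_conjTranspose_same U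

lemma ed_pd_of_pos {A U : Matrix ι ι ℂ} {d : ι → ℝ} (h : IsED A U d) (hd : ∀ i, 0 < d i) :
    A.PosDef := by
  have hUU' : Uᴴ * U = 1 := by
    rw [← Matrix.star_eq_conjTranspose]; exact Matrix.mem_unitaryGroup_iff'.mp h.1
  have hUU : U * Uᴴ = 1 := by
    rw [← Matrix.star_eq_conjTranspose]; exact Matrix.mem_unitaryGroup_iff.mp h.1
  have hdiag : (Matrix.diagonal (fun i => (d i : ℂ))).PosDef := by
    rw [Matrix.posDef_diagonal_iff]
    intro i
    exact_mod_cast hd i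
  have := pd_conj (C := Uᴴ) (Ci := U) hdiag (by rw [hUU])
  rw [conjTranspose_conjTranspose] at this
  rw [h.2, Matrix.mul_assoc] at *
  exact this

lemma ed_inv {A U : Matrix ι ι ℂ} {d : ι → ℝ} (h : IsED A U d) (hd : ∀ i, d i ≠ 0) :
    IsED A⁻¹ U (fun i => (d i)⁻¹) := by
  have hcand : IsED (U * Matrix.diagonal (fun i => (((d i)⁻¹ : ℝ) : ℂ)) * Uᴴ) U
      (fun i => (d i)⁻¹) := ⟨h.1, rfl⟩
  have hprod : A * (U * Matrix.diagonal (fun i => (((d i)⁻¹ : ℝ) : ℂ)) * Uᴴ) = 1 := by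
    have := h.mul hcand
    rw [this.2]
    have : (fun i => (((d * fun i => (d i)⁻¹) i : ℝ) : ℂ)) = fun _ => (1 : ℂ) := by
      funext i
      show (((d i) * (d i)⁻¹ : ℝ) : ℂ) = 1
      rw [mul_inv_cancel₀ (hd i)]
      norm_num
    rw [this, diagonal_one, mul_one]
    rw [← Matrix.star_eq_conjTranspose]; exact Matrix.mem_unitaryGroup_iff.mp h.1
  rw [Matrix.inv_eq_right_inv hprod]
  exact hcand

lemma lle_congr {A B : Matrix ι ι ℂ} (C : Matrix ι ι ℂ) (h : LoewnerLE A B) :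
    LoewnerLE (Cᴴ * A * C) (Cᴴ * B * C) := by
  unfold LoewnerLE at *
  have : Cᴴ * B * C - Cᴴ * A * C = Cᴴ * (B - A) * C := by noncomm_ring
  rw [this]
  exact psd_conj h C

lemma lle_trans {A B C : Matrix ι ι ℂ} (h1 : LoewnerLE A B) (h2 : LoewnerLE B C) :
    LoewnerLE A C := by
  unfold LoewnerLE at *
  have : C - A = (C - B) + (B - A) := by abel
  rw [this]
  exact h2.add h1

/-- Inverse is antitone on positive definite matrices. -/
lemma inv_antitone {P Q : Matrix ι ι ℂ} (hP : P.PosDef) (hQ : Q.PosDef)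
    (h : LoewnerLE P Q) : LoewnerLE Q⁻¹ P⁻¹ := by
  classical
  obtain ⟨U, dp, hed⟩ : ∃ U dp, IsED P U dp ∧ ∀ i, 0 < dp i :=
    ⟨_, _, isED_of_isHermitian hP.isHermitian, hP.eigenvalues_pos⟩
  obtain ⟨hedP, hdp⟩ := hed
  set s : ι → ℝ := fun i => (Real.sqrt (dp i))⁻¹ with hs
  have hspos : ∀ i, 0 < s i := fun i => inv_pos.mpr (Real.sqrt_pos.mpr (hdp i))
  set S : Matrix ι ι ℂ := U * Matrix.diagonal (fun i => ((s i : ℝ) : ℂ)) * Uᴴ with hSdef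
  have hedS : IsED S U s := ⟨hedP.1, rfl⟩
  have hSH : Sᴴ = S := hedS.isHermitian
  have hsps : ∀ i, s i * dp i * s i = 1 := by
    intro i
    have h0 : Real.sqrt (dp i) ≠ 0 := ne_of_gt (Real.sqrt_pos.mpr (hdp i))
    have h1 : Real.sqrt (dp i) * Real.sqrt (dp i) = dp i :=
      Real.mul_self_sqrt (le_of_lt (hdp i))
    show (Real.sqrt (dp i))⁻¹ * dp i * (Real.sqrt (dp i))⁻¹ = 1
    rw [mul_comm, ← mul_assoc, ← mul_inv, h1, inv_mul_cancel₀ (ne_of_gt (hdp i))]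
  have hSPS : S * P * S = 1 :=
    ed_eq_one ((hedS.mul hedP).mul hedS) (fun i => hsps i)
  -- S is invertible with inverse S'
  set s' : ι → ℝ := fun i => Real.sqrt (dp i) with hs'
  set S' : Matrix ι ι ℂ := U * Matrix.diagonal (fun i => ((s' i : ℝ) : ℂ)) * Uᴴ with hS'def
  have hedS' : IsED S' U s' := ⟨hedP.1, rfl⟩
  have hS'S : S' * S = 1 := by
    refine ed_eq_one (hedS'.mul hedS) (fun i => ?_)
    show Real.sqrt (dp i) * (Real.sqrt (dp i))⁻¹ = 1
    exact mul_inv_cancel₀ (ne_of_gt (Real.sqrt_pos.mpr (hdp i)))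
  have hSS' : S * S' = 1 := by
    refine ed_eq_one (hedS.mul hedS') (fun i => ?_)
    show (Real.sqrt (dp i))⁻¹ * Real.sqrt (dp i) = 1
    exact inv_mul_cancel₀ (ne_of_gt (Real.sqrt_pos.mpr (hdp i)))
  -- congruence
  have h1 : LoewnerLE (S * P * S) (S * Q * S) := by
    have := lle_congr S h
    rwa [hSH] at this
  rw [hSPS] at h1
  set Z := S * Q * S with hZ
  have hZpd : Z.PosDef := by
    have := pd_conj (C := S) (Ci := S') hQ hS'S
    rwa [hSH] at this
  obtain ⟨V, z, hedZ, hz⟩ : ∃ V z, IsED Z V z ∧ ∀ i, 0 < z i :=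
    ⟨_, _, isED_of_isHermitian hZpd.isHermitian, hZpd.eigenvalues_pos⟩
  have hz1 : ∀ i, 1 ≤ z i := by
    have hsub : IsED (Z - 1) V (z - fun _ => 1) := hedZ.sub (ed_one_of_unitary hedZ.1)
    have := (ed_psd_iff hsub).mp h1
    intro i
    have := this i
    simp only [Pi.sub_apply] at this
    linarith
  -- Z⁻¹ ≤ 1
  have hedZinv : IsED Z⁻¹ V (fun i => (z i)⁻¹) :=
    ed_inv hedZ (fun i => ne_of_gt (hz i))
  have h2 : LoewnerLE Z⁻¹ 1 := by
    unfold LoewnerLE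
    have hsub : IsED ((1 : Matrix ι ι ℂ) - Z⁻¹) V ((fun _ => 1) - fun i => (z i)⁻¹) :=
      IsED.sub (ed_one_of_unitary hedZ.1) hedZinv
    rw [ed_psd_iff hsub]
    intro i
    simp only [Pi.sub_apply]
    have h3 := hz i
    have h4 := hz1 i
    have : (z i)⁻¹ ≤ 1 := by
      rw [inv_le_one_iff₀]
      right; exact h4
    linarith
  -- conjugate back by S
  have h3 : LoewnerLE (Sᴴ * Z⁻¹ * S) (Sᴴ * 1 * S) := lle_congr S h2
  rw [hSH] at h3
  have hQQ : Q * Q⁻¹ = 1 :=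
    Matrix.mul_nonsing_inv Q ((Matrix.isUnit_iff_isUnit_det Q).mp hQ.isUnit)
  have e1 : S * Z⁻¹ * S = Q⁻¹ := by
    have hinv : Z⁻¹ = S' * Q⁻¹ * S' := by
      apply Matrix.inv_eq_right_inv
      calc Z * (S' * Q⁻¹ * S') = S * Q * (S * S') * Q⁻¹ * S' := by rw [hZ]; noncomm_ring
        _ = S * (Q * Q⁻¹) * S' := by rw [hSS']; noncomm_ring
        _ = S * S' := by rw [hQQ, mul_one]
        _ = 1 := hSS'
    rw [hinv]
    calc S * (S' * Q⁻¹ * S') * S = (S * S') * Q⁻¹ * (S' * S) := by noncomm_ring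
      _ = Q⁻¹ := by rw [hSS', hS'S, one_mul, mul_one]
  have e2 : S * 1 * S = P⁻¹ := by
    rw [mul_one]
    have h1 : IsED (S * S) U (s * s) := hedS.mul hedS
    have h2 : IsED P⁻¹ U (fun i => (dp i)⁻¹) := ed_inv hedP (fun i => ne_of_gt (hdp i))
    have hfun : (fun i => (((s * s) i : ℝ) : ℂ)) = fun i => ((((dp i)⁻¹ : ℝ)) : ℂ) := by
      funext i
      have hss : (s * s) i = (dp i)⁻¹ := by
        rw [Pi.mul_apply, hs, ← mul_inv, Real.mul_self_sqrt (le_of_lt (hdp i))]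
      rw [hss]
    rw [h1.2, h2.2, hfun]
  rw [e1, e2] at h3
  exact h3


lemma ed_congr {A U : Matrix ι ι ℂ} {d d' : ι → ℝ} (h : IsED A U d)
    (hdd : ∀ i, d i = d' i) : IsED A U d' := by
  have : d = d' := funext hdd
  rwa [this] at h

lemma ed_eq {A B U : Matrix ι ι ℂ} {d e : ι → ℝ} (hA : IsED A U d) (hB : IsED B U e)
    (hde : ∀ i, d i = e i) : A = B := by
  rw [hA.2, hB.2]
  have : d = e := funext hde
  rw [this]

lemma lle_add {A B X Y : Matrix ι ι ℂ} (h1 : LoewnerLE A B) (h2 : LoewnerLE X Y) :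
    LoewnerLE (A + X) (B + Y) := by
  unfold LoewnerLE at *
  have : B + Y - (A + X) = (B - A) + (Y - X) := by abel
  rw [this]
  exact h1.add h2

lemma rsmul_conjTranspose (r : ℝ) (M : Matrix ι ι ℂ) : (r • M)ᴴ = r • Mᴴ := by
  ext i j
  simp [Matrix.conjTranspose_apply]

lemma psd_rsmul {X : Matrix ι ι ℂ} (hX : X.PosSemidef) {c : ℝ} (hc : 0 ≤ c) :
    (c • X).PosSemidef := by
  have key : c • X = ((Real.sqrt c : ℝ) • (1 : Matrix ι ι ℂ))ᴴ * X
      * ((Real.sqrt c : ℝ) • (1 : Matrix ι ι ℂ)) := by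
    have hH : ((Real.sqrt c : ℝ) • (1 : Matrix ι ι ℂ))ᴴ
        = (Real.sqrt c : ℝ) • (1 : Matrix ι ι ℂ) := by
      rw [rsmul_conjTranspose, conjTranspose_one]
    rw [hH, Matrix.smul_mul, Matrix.mul_smul, one_mul, mul_one, smul_smul,
      Real.mul_self_sqrt hc]
  rw [key]
  exact psd_conj hX _
attribute [local instance] Classical.propDecidable

lemma lle_smul {A B : Matrix ι ι ℂ} (h : LoewnerLE A B) {c : ℝ} (hc : 0 ≤ c) :
    LoewnerLE (c • A) (c • B) := by
  unfold LoewnerLE at *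
  rw [← smul_sub]
  exact psd_rsmul h hc

lemma pd_smul_pos {X : Matrix ι ι ℂ} (hX : X.PosDef) {c : ℝ} (hc : 0 < c) :
    (c • X).PosDef := by
  obtain ⟨U, d, hed, hd⟩ : ∃ U d, IsED X U d ∧ ∀ i, 0 < d i :=
    ⟨_, _, isED_of_isHermitian hX.isHermitian, hX.eigenvalues_pos⟩
  exact ed_pd_of_pos (hed.smul c) (fun i => mul_pos hc (hd i))

lemma pd_combo {X Y : Matrix ι ι ℂ} (hX : X.PosDef) (hY : Y.PosDef) {t : ℝ}
    (ht0 : 0 ≤ t) (ht1 : t ≤ 1) : ((1 - t) • X + t • Y).PosDef := by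
  rcases eq_or_lt_of_le ht1 with h1 | h1
  · subst h1
    simpa using hY
  · have h2 : (0:ℝ) < 1 - t := by linarith
    exact (pd_smul_pos hX h2).add_posSemidef (psd_rsmul hY.posSemidef ht0)

lemma psd_le_smul_one {P : Matrix ι ι ℂ} (hP : P.PosSemidef) :
    ∃ τ : ℝ, 0 ≤ τ ∧ LoewnerLE P (τ • 1) := by
  obtain ⟨U, d, hed, hd⟩ : ∃ U d, IsED P U d ∧ ∀ i, 0 ≤ d i :=
    ⟨_, _, isED_of_isHermitian hP.isHermitian, hP.eigenvalues_nonneg⟩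
  refine ⟨∑ i, d i, Finset.sum_nonneg (fun i _ => hd i), ?_⟩
  unfold LoewnerLE
  have hed1 : IsED ((∑ i, d i) • (1 : Matrix ι ι ℂ)) U (fun _ => ∑ i, d i) := by
    have := (ed_one_of_unitary hed.1).smul (∑ i, d i)
    exact ed_congr this (fun i => by simp)
  rw [ed_psd_iff (hed1.sub hed)]
  intro i
  simp only [Pi.sub_apply]
  have : d i ≤ ∑ j, d j := Finset.single_le_sum (fun j _ => hd j) (Finset.mem_univ i)
  linarith

lemma psd_block11 {Z : Matrix (ι ⊕ κ) (ι ⊕ κ) ℂ} (h : Z.PosSemidef) :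
    (Z.toBlocks₁₁).PosSemidef := by
  have := h.submatrix (Sum.inl : ι → ι ⊕ κ)
  exact this

lemma lle_block11 {Z W : Matrix (ι ⊕ κ) (ι ⊕ κ) ℂ} (h : LoewnerLE Z W) :
    LoewnerLE Z.toBlocks₁₁ W.toBlocks₁₁ := by
  unfold LoewnerLE at *
  have : W.toBlocks₁₁ - Z.toBlocks₁₁ = (W - Z).toBlocks₁₁ := by
    ext i j
    simp [Matrix.toBlocks₁₁]
  rw [this]
  exact psd_block11 h

lemma smul1_mul (x : ℝ) (M : Matrix ι ι ℂ) : (x • (1 : Matrix ι ι ℂ)) * M = x • M := by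
  rw [Matrix.smul_mul, one_mul]

lemma mul_smul1 (x : ℝ) (M : Matrix ι ι ℂ) : M * (x • (1 : Matrix ι ι ℂ)) = x • M := by
  rw [Matrix.mul_smul, mul_one]

/-- The rotation-type unitary used in the dilation argument. -/
noncomputable def Uu (a b : ℝ) : Matrix (ι ⊕ ι) (ι ⊕ ι) ℂ :=
  Matrix.fromBlocks (a • 1) (b • 1) (b • 1) (-(a • (1 : Matrix ι ι ℂ)))

lemma Uu_conjTranspose (a b : ℝ) : (Uu (ι := ι) a b)ᴴ = Uu a b := by
  unfold Uu
  rw [fromBlocks_conjTranspose]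
  simp only [conjTranspose_neg, rsmul_conjTranspose, conjTranspose_one]

lemma Uu_conj_blocks (a b : ℝ) (P Q : Matrix ι ι ℂ) :
    Uu a b * (Matrix.fromBlocks P 0 0 Q) * Uu a b =
    Matrix.fromBlocks ((a * a) • P + (b * b) • Q) ((a * b) • (P - Q))
      ((a * b) • (P - Q)) ((b * b) • P + (a * a) • Q) := by
  unfold Uu
  rw [fromBlocks_multiply, fromBlocks_multiply]
  simp only [Matrix.smul_mul, Matrix.mul_smul, one_mul, Matrix.mul_one, Matrix.zero_mul,
    Matrix.mul_zero, smul_zero, add_zero, zero_add, Matrix.neg_mul, Matrix.mul_neg,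
    smul_neg, neg_smul, neg_neg, smul_smul]
  have e1 : (b * a) • P + -((a * b) • Q) = (a * b) • (P - Q) := by module
  have e2 : (a * b) • P + -((b * a) • Q) = (a * b) • (P - Q) := by module
  rw [e1, e2]

lemma Uu_mul_self {a b : ℝ} (hab : a * a + b * b = 1) :
    Uu (ι := ι) a b * Uu a b = 1 := by
  have h1 : Uu (ι := ι) a b * Uu a b = Uu a b * (Matrix.fromBlocks 1 0 0 1) * Uu a b := by
    rw [Matrix.fromBlocks_one, mul_one]
  rw [h1, Uu_conj_blocks]
  rw [sub_self, smul_zero, ← add_smul, hab, one_smul, ← add_smul]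
  rw [show b * b + a * a = 1 by linarith, one_smul, Matrix.fromBlocks_one]

lemma Uu_mem {a b : ℝ} (hab : a * a + b * b = 1) :
    Uu (ι := ι) a b ∈ Matrix.unitaryGroup (ι ⊕ ι) ℂ := by
  rw [Matrix.mem_unitaryGroup_iff, Matrix.star_eq_conjTranspose, Uu_conjTranspose]
  exact Uu_mul_self hab

section FG

variable (f : ℝ → ℝ)

/-- `g = 1/f` is operator monotone (increasing) given that `f` is operator
monotone decreasing and positive. -/
lemma gmono {m : ℕ} (hf_pos : ∀ x : ℝ, 0 < x → 0 < f x)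
    (hf_dec : ∀ (A B : Matrix (Fin m) (Fin m) ℂ), A.PosDef → B.PosDef →
      LoewnerLE A B → LoewnerLE (cfc f B) (cfc f A))
    (e : ι ≃ Fin m) (A B : Matrix ι ι ℂ) (hA : A.PosDef) (hB : B.PosDef)
    (hAB : LoewnerLE A B) :
    LoewnerLE (cfc (fun x => (f x)⁻¹) A) (cfc (fun x => (f x)⁻¹) B) := by
  obtain ⟨UA, dA, hedA, hdA⟩ : ∃ U d, IsED A U d ∧ ∀ i, 0 < d i :=
    ⟨_, _, isED_of_isHermitian hA.isHermitian, hA.eigenvalues_pos⟩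
  obtain ⟨UB, dB, hedB, hdB⟩ : ∃ U d, IsED B U d ∧ ∀ i, 0 < d i :=
    ⟨_, _, isED_of_isHermitian hB.isHermitian, hB.eigenvalues_pos⟩
  -- transport along the reindexing equivalence
  have hedAr := hedA.reindex e
  have hedBr := hedB.reindex e
  have hApd : (Matrix.reindex e e A).PosDef := ed_pd_of_pos hedAr (fun i => hdA _)
  have hBpd : (Matrix.reindex e e B).PosDef := ed_pd_of_pos hedBr (fun i => hdB _)
  have hABr : LoewnerLE (Matrix.reindex e e A) (Matrix.reindex e e B) := by
    unfold LoewnerLE at *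
    have hsub : Matrix.reindex e e B - Matrix.reindex e e A
        = (B - A).submatrix ⇑e.symm ⇑e.symm := by
      simp only [Matrix.reindex_apply]
      ext i j
      simp [Matrix.submatrix_apply]
    rw [hsub]
    exact hAB.submatrix _
  have h1 : LoewnerLE (cfc f (Matrix.reindex e e B)) (cfc f (Matrix.reindex e e A)) :=
    hf_dec _ _ hApd hBpd hABr
  -- identify cfc of reindexed matrices with reindexed cfc
  have hcfcA : cfc f (Matrix.reindex e e A) = Matrix.reindex e e (cfc f A) :=
    ed_eq (hedAr.cfc f) ((hedA.cfc f).reindex e) (fun i => rfl)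
  have hcfcB : cfc f (Matrix.reindex e e B) = Matrix.reindex e e (cfc f B) :=
    ed_eq (hedBr.cfc f) ((hedB.cfc f).reindex e) (fun i => rfl)
  rw [hcfcA, hcfcB] at h1
  have h2 : LoewnerLE (cfc f B) (cfc f A) := by
    unfold LoewnerLE at h1 ⊢
    have hsub : Matrix.reindex e e (cfc f A) - Matrix.reindex e e (cfc f B)
        = (cfc f A - cfc f B).submatrix ⇑e.symm ⇑e.symm := by
      simp only [Matrix.reindex_apply]
      ext i j
      simp [Matrix.submatrix_apply]
    rw [hsub] at h1
    exact (Matrix.posSemidef_submatrix_equiv e.symm).mp h1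
  -- apply inverse antitonicity
  have hfApd : (cfc f A).PosDef :=
    ed_pd_of_pos (hedA.cfc f) (fun i => hf_pos _ (hdA i))
  have hfBpd : (cfc f B).PosDef :=
    ed_pd_of_pos (hedB.cfc f) (fun i => hf_pos _ (hdB i))
  have h3 : LoewnerLE (cfc f A)⁻¹ (cfc f B)⁻¹ := inv_antitone hfBpd hfApd h2
  have hinvA : (cfc f A)⁻¹ = cfc (fun x => (f x)⁻¹) A :=
    ed_eq (ed_inv (hedA.cfc f) (fun i => ne_of_gt (hf_pos _ (hdA i))))
      (hedA.cfc (fun x => (f x)⁻¹)) (fun i => rfl)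
  have hinvB : (cfc f B)⁻¹ = cfc (fun x => (f x)⁻¹) B :=
    ed_eq (ed_inv (hedB.cfc f) (fun i => ne_of_gt (hf_pos _ (hdB i))))
      (hedB.cfc (fun x => (f x)⁻¹)) (fun i => rfl)
  rwa [hinvA, hinvB] at h3

/-- Dilation argument: the key inequality with a `δ`-perturbation. -/
lemma stepB {k : ℕ} (hf_pos : ∀ x : ℝ, 0 < x → 0 < f x)
    (hf_dec : ∀ (m : ℕ) (A B : Matrix (Fin m) (Fin m) ℂ), A.PosDef → B.PosDef →
      LoewnerLE A B → LoewnerLE (cfc f B) (cfc f A))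
    (A B : Matrix (Fin k) (Fin k) ℂ) (hA : A.PosDef) (hB : B.PosDef)
    (t δ : ℝ) (ht0 : 0 ≤ t) (ht1 : t ≤ 1) (hδ : 0 < δ)
    (hAδ : (A - δ • 1).PosDef) (hBδ : (B - δ • 1).PosDef) :
    LoewnerLE ((1 - t) • cfc (fun x => (f x)⁻¹) (A - δ • 1)
        + t • cfc (fun x => (f x)⁻¹) (B - δ • 1))
      (cfc (fun x => (f x)⁻¹) ((1 - t) • A + t • B)) := by
  set g : ℝ → ℝ := fun x => (f x)⁻¹ with hg
  set a : ℝ := Real.sqrt (1 - t) with ha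
  set b : ℝ := Real.sqrt t with hb
  have haa : a * a = 1 - t := Real.mul_self_sqrt (by linarith)
  have hbb : b * b = t := Real.mul_self_sqrt ht0
  have hab1 : a * a + b * b = 1 := by rw [haa, hbb]; ring
  set A' : Matrix (Fin k) (Fin k) ℂ := A - δ • 1 with hA'
  set B' : Matrix (Fin k) (Fin k) ℂ := B - δ • 1 with hB'
  set M : Matrix (Fin k) (Fin k) ℂ := (1 - t) • A + t • B with hM
  set M' : Matrix (Fin k) (Fin k) ℂ := (1 - t) • A' + t • B' with hM'
  set N' : Matrix (Fin k) (Fin k) ℂ := t • A' + (1 - t) • B' with hN'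
  set C : Matrix (Fin k) (Fin k) ℂ := (a * b) • (A' - B') with hC
  -- C is Hermitian
  have hABH : (A' - B').IsHermitian := hAδ.isHermitian.sub hBδ.isHermitian
  have hCH : Cᴴ = C := by
    rw [hC, rsmul_conjTranspose, hABH.eq]
  have hCC : (C * C).PosSemidef := by
    have := Matrix.posSemidef_conjTranspose_mul_self C
    rwa [hCH] at this
  obtain ⟨τ, hτ0, hτ⟩ := psd_le_smul_one hCC
  set α : ℝ := δ / (τ + 1) with hα
  have hα0 : 0 < α := div_pos hδ (by linarith)
  have hαC : LoewnerLE (α • (C * C)) (δ • 1) := by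
    have h1 : LoewnerLE (α • (C * C)) (α • (τ • (1 : Matrix (Fin k) (Fin k) ℂ))) :=
      lle_smul hτ (le_of_lt hα0)
    have h2 : LoewnerLE (α • (τ • (1 : Matrix (Fin k) (Fin k) ℂ))) (δ • 1) := by
      unfold LoewnerLE
      rw [smul_smul]
      have : δ • (1 : Matrix (Fin k) (Fin k) ℂ) - (α * τ) • 1 = (δ - α * τ) • 1 := by module
      rw [this]
      refine psd_rsmul Matrix.PosSemidef.one ?_
      rw [hα, sub_nonneg, div_mul_eq_mul_div, div_le_iff₀ (by linarith)]
      nlinarith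
    exact lle_trans h1 h2
  -- the dilation
  set W : Matrix (Fin k ⊕ Fin k) (Fin k ⊕ Fin k) ℂ := Uu a b with hW
  have hWmem := Uu_mem (ι := Fin k) hab1
  have hWW : W * W = 1 := Uu_mul_self hab1
  have hWH : Wᴴ = W := Uu_conjTranspose a b
  set X' : Matrix (Fin k ⊕ Fin k) (Fin k ⊕ Fin k) ℂ := Matrix.fromBlocks A' 0 0 B' with hX'
  set T' : Matrix (Fin k ⊕ Fin k) (Fin k ⊕ Fin k) ℂ := W * X' * W with hT'
  have hT'blocks : T' = Matrix.fromBlocks M' C C N' := by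
    rw [hT', hX', hW, Uu_conj_blocks, haa, hbb, hM', hN', hC]
  -- eigendecompositions
  obtain ⟨UA, dA, hedA, hdA⟩ : ∃ U d, IsED A' U d ∧ ∀ i, 0 < d i :=
    ⟨_, _, isED_of_isHermitian hAδ.isHermitian, hAδ.eigenvalues_pos⟩
  obtain ⟨UB, dB, hedB, hdB⟩ : ∃ U d, IsED B' U d ∧ ∀ i, 0 < d i :=
    ⟨_, _, isED_of_isHermitian hBδ.isHermitian, hBδ.eigenvalues_pos⟩
  have hedX' : IsED X' (Matrix.fromBlocks UA 0 0 UB) (Sum.elim dA dB) :=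
    hedA.fromBlocks hedB
  have hX'pd : X'.PosDef := ed_pd_of_pos hedX' (by rintro (i | j) <;> [exact hdA i; exact hdB j])
  have hT'pd : T'.PosDef := by
    have h1 := pd_conj (C := W) (Ci := W) hX'pd hWW
    rw [hWH] at h1
    exact h1
  -- P1 and P2
  set P1 : Matrix (Fin k) (Fin k) ℂ := M' + α • (C * C) with hP1
  set P2 : Matrix (Fin k) (Fin k) ℂ := N' + α⁻¹ • 1 with hP2
  have hM'pd : M'.PosDef := pd_combo hAδ hBδ ht0 ht1
  have hN'pd : N'.PosDef := by
    have := pd_combo hBδ hAδ ht0 ht1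
    have e : (1 - t) • B' + t • A' = N' := by rw [hN']; abel
    rwa [e] at this
  have hP1pd : P1.PosDef := hM'pd.add_posSemidef (psd_rsmul hCC (le_of_lt hα0))
  have hP2pd : P2.PosDef := hN'pd.add_posSemidef
    (psd_rsmul Matrix.PosSemidef.one (le_of_lt (inv_pos.mpr hα0)))
  set D : Matrix (Fin k ⊕ Fin k) (Fin k ⊕ Fin k) ℂ := Matrix.fromBlocks P1 0 0 P2 with hD
  obtain ⟨U1, d1, hed1, hd1⟩ : ∃ U d, IsED P1 U d ∧ ∀ i, 0 < d i :=
    ⟨_, _, isED_of_isHermitian hP1pd.isHermitian, hP1pd.eigenvalues_pos⟩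
  obtain ⟨U2, d2, hed2, hd2⟩ : ∃ U d, IsED P2 U d ∧ ∀ i, 0 < d i :=
    ⟨_, _, isED_of_isHermitian hP2pd.isHermitian, hP2pd.eigenvalues_pos⟩
  have hedD : IsED D (Matrix.fromBlocks U1 0 0 U2) (Sum.elim d1 d2) := hed1.fromBlocks hed2
  have hDpd : D.PosDef := ed_pd_of_pos hedD (by rintro (i | j) <;> [exact hd1 i; exact hd2 j])
  -- T' ≼ D
  have hTD : LoewnerLE T' D := by
    unfold LoewnerLE
    set sa : ℝ := Real.sqrt α with hsa
    have hsa0 : 0 < sa := Real.sqrt_pos.mpr hα0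
    have hsaa : sa * sa = α := Real.mul_self_sqrt (le_of_lt hα0)
    set R : Matrix (Fin k ⊕ Fin k) (Fin k ⊕ Fin k) ℂ :=
      Matrix.fromBlocks (sa • C) 0 (-(sa⁻¹ • (1 : Matrix (Fin k) (Fin k) ℂ))) 0 with hR
    have hRR : R * Rᴴ = Matrix.fromBlocks (α • (C * C)) (-C) (-C) (α⁻¹ • 1) := by
      rw [hR, fromBlocks_conjTranspose, fromBlocks_multiply]
      simp only [conjTranspose_zero, conjTranspose_neg, rsmul_conjTranspose,
        conjTranspose_one, hCH, Matrix.mul_zero, Matrix.zero_mul, add_zero, zero_add,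
        Matrix.smul_mul, Matrix.mul_smul, Matrix.neg_mul, Matrix.mul_neg, mul_one,
        one_mul, smul_neg, neg_neg, smul_smul, hsaa]
      rw [mul_inv_cancel₀ (ne_of_gt hsa0), inv_mul_cancel₀ (ne_of_gt hsa0), one_smul,
        ← mul_inv, hsaa]
    have hsub : D - T' = R * Rᴴ := by
      rw [hRR, hD, hT'blocks]
      have : Matrix.fromBlocks P1 0 0 P2 - Matrix.fromBlocks M' C C N'
          = Matrix.fromBlocks (P1 - M') (0 - C) (0 - C) (P2 - N') := by
        ext (i | i) (j | j) <;> simp [Matrix.fromBlocks, Matrix.sub_apply]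
      rw [this, hP1, hP2]
      simp only [add_sub_cancel_left, zero_sub]
    rw [hsub]
    exact Matrix.posSemidef_self_mul_conjTranspose R
  -- apply monotonicity of g in dimension k + k
  have hgm : LoewnerLE (cfc g T') (cfc g D) :=
    gmono f hf_pos (hf_dec (k + k)) finSumFinEquiv T' D hT'pd hDpd hTD
  -- compute the two cfc's blockwise
  have hedT' : IsED T' (W * Matrix.fromBlocks UA 0 0 UB) (Sum.elim dA dB) := by
    have h1 := hedX'.conjU hWmem
    rwa [hWH] at h1
  have hcfcT' : cfc g T' = W * (Matrix.fromBlocks (cfc g A') 0 0 (cfc g B')) * W := by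
    have h1 : IsED (Matrix.fromBlocks (cfc g A') 0 0 (cfc g B'))
        (Matrix.fromBlocks UA 0 0 UB) (Sum.elim (g ∘ dA) (g ∘ dB)) :=
      (hedA.cfc g).fromBlocks (hedB.cfc g)
    have h2 := h1.conjU hWmem
    rw [hWH] at h2
    exact ed_eq (hedT'.cfc g) h2 (by rintro (i | j) <;> rfl)
  have hcfcD : cfc g D = Matrix.fromBlocks (cfc g P1) 0 0 (cfc g P2) :=
    ed_eq (hedD.cfc g) ((hed1.cfc g).fromBlocks (hed2.cfc g)) (by rintro (i | j) <;> rfl)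
  -- take upper-left blocks
  have h11 : LoewnerLE ((cfc g T').toBlocks₁₁) ((cfc g D).toBlocks₁₁) := lle_block11 hgm
  have hblockT : (cfc g T').toBlocks₁₁ = (1 - t) • cfc g A' + t • cfc g B' := by
    rw [hcfcT', hW, Uu_conj_blocks, haa, hbb]
    rw [Matrix.toBlocks_fromBlocks₁₁]
  have hblockD : (cfc g D).toBlocks₁₁ = cfc g P1 := by
    rw [hcfcD, Matrix.toBlocks_fromBlocks₁₁]
  rw [hblockT, hblockD] at h11
  -- P1 ≼ M and conclude by monotonicity at dimension k
  have hMpd : M.PosDef := pd_combo hA hB ht0 ht1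
  have hP1M : LoewnerLE P1 M := by
    unfold LoewnerLE
    have e : M - P1 = δ • 1 - α • (C * C) := by
      rw [hP1, hM', hM, hA', hB']
      module
    rw [e]
    exact hαC
  have hlast : LoewnerLE (cfc g P1) (cfc g M) :=
    gmono f hf_pos (hf_dec k) (Equiv.refl (Fin k)) P1 M hP1pd hMpd hP1M
  exact lle_trans h11 hlast

end FG


variable (g : ℝ → ℝ)

/-- Quantitative right-continuity from the combination inequality. -/
lemma scalar_right (hg_pos : ∀ x : ℝ, 0 < x → 0 < g x)
    (hg_comb : ∀ u v δ t : ℝ, 0 < u → 0 < v → 0 < δ → 0 ≤ t → t ≤ 1 →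
      (1 - t) * g u + t * g v ≤ g ((1 - t) * u + t * v + δ))
    (x ε : ℝ) (hx : 0 < x) (hε : 0 < ε) :
    ∃ δ₀ : ℝ, 0 < δ₀ ∧ ∀ δ : ℝ, 0 < δ → δ ≤ δ₀ → g (x + δ) ≤ g x + ε := by
  have hgx : 0 < g x := hg_pos x hx
  set t : ℝ := max (1/2) (g x / (g x + ε)) with ht
  have ht0 : (0:ℝ) < t := lt_of_lt_of_le (by norm_num) (le_max_left _ _)
  have ht1 : t < 1 := by
    apply max_lt (by norm_num)
    rw [div_lt_one (by linarith)]
    linarith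
  have htg : g x / (g x + ε) ≤ t := le_max_right _ _
  set w : ℝ := x / 2 with hw
  have hw0 : 0 < w := by positivity
  have hgw : 0 < g w := hg_pos w hw0
  refine ⟨(1 - t) * x / (4 * t), div_pos (mul_pos (by linarith) hx) (by linarith), ?_⟩
  intro δ hδ0 hδ1
  set δ' : ℝ := (1 - t) * (x - w) - t * δ with hδ'
  have hδ'0 : 0 < δ' := by
    rw [hδ', hw]
    have h1 : t * δ ≤ t * ((1 - t) * x / (4 * t)) := by
      apply mul_le_mul_of_nonneg_left hδ1 (le_of_lt ht0)
    have h2 : t * ((1 - t) * x / (4 * t)) = (1 - t) * x / 4 := by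
      field_simp
    nlinarith
  have key := hg_comb w (x + δ) δ' t hw0 (by linarith) hδ'0 (le_of_lt ht0) (le_of_lt ht1)
  have harg : (1 - t) * w + t * (x + δ) + δ' = x := by
    rw [hδ']
    ring
  rw [harg] at key
  -- g(x+δ) ≤ (g x - (1-t) g w)/t ≤ g x / t ≤ g x + ε
  have h3 : t * g (x + δ) ≤ g x := by nlinarith
  have h4 : g x ≤ t * (g x + ε) := by
    have := mul_le_mul_of_nonneg_right htg (le_of_lt (show (0:ℝ) < g x + ε by linarith))
    rwa [div_mul_cancel₀ _ (by linarith : g x + ε ≠ 0)] at this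
  have ht0' := ht0
  nlinarith

/-- Concavity on the positive axis. -/
lemma scalar_concave (hg_pos : ∀ x : ℝ, 0 < x → 0 < g x)
    (hg_comb : ∀ u v δ t : ℝ, 0 < u → 0 < v → 0 < δ → 0 ≤ t → t ≤ 1 →
      (1 - t) * g u + t * g v ≤ g ((1 - t) * u + t * v + δ))
    (u v t : ℝ) (hu : 0 < u) (hv : 0 < v) (ht0 : 0 ≤ t) (ht1 : t ≤ 1) :
    (1 - t) * g u + t * g v ≤ g ((1 - t) * u + t * v) := by
  set M : ℝ := (1 - t) * u + t * v with hM
  have hM0 : 0 < M := by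
    rw [hM]
    have h1 : (1 - t) * min u v ≤ (1 - t) * u :=
      mul_le_mul_of_nonneg_left (min_le_left u v) (by linarith)
    have h2 : t * min u v ≤ t * v :=
      mul_le_mul_of_nonneg_left (min_le_right u v) ht0
    have h3 : 0 < min u v := lt_min hu hv
    nlinarith
  apply le_of_forall_pos_le_add
  intro ε hε
  obtain ⟨δ₀, hδ₀, hkey⟩ := scalar_right g hg_pos hg_comb M ε hM0 hε
  have h1 := hg_comb u v δ₀ t hu hv hδ₀ ht0 ht1
  have h2 := hkey δ₀ hδ₀ le_rfl
  calc (1 - t) * g u + t * g v ≤ g (M + δ₀) := h1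
    _ ≤ g M + ε := h2

/-- Quantitative left-continuity. -/
lemma scalar_left (hg_pos : ∀ x : ℝ, 0 < x → 0 < g x)
    (hg_mono : ∀ x y : ℝ, 0 < x → x ≤ y → g x ≤ g y)
    (hg_comb : ∀ u v δ t : ℝ, 0 < u → 0 < v → 0 < δ → 0 ≤ t → t ≤ 1 →
      (1 - t) * g u + t * g v ≤ g ((1 - t) * u + t * v + δ))
    (x ε : ℝ) (hx : 0 < x) (hε : 0 < ε) :
    ∃ δ₀ : ℝ, 0 < δ₀ ∧ δ₀ < x ∧ ∀ δ : ℝ, 0 < δ → δ ≤ δ₀ → g x - g (x - δ) ≤ ε := by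
  set w : ℝ := x / 2 with hw
  have hw0 : 0 < w := by positivity
  set K : ℝ := g x - g w with hK
  have hK0 : 0 ≤ K := by
    rw [hK, sub_nonneg]
    exact hg_mono w x hw0 (by linarith [hw0])
  refine ⟨min (x/4) (ε * (x/2) / (K + 1)), ?_, ?_, ?_⟩
  · apply lt_min (by positivity)
    positivity
  · exact lt_of_le_of_lt (min_le_left _ _) (by linarith)
  · intro δ hδ0 hδ1
    have hδx4 : δ ≤ x / 4 := le_trans hδ1 (min_le_left _ _)
    have hδK : δ ≤ ε * (x/2) / (K + 1) := le_trans hδ1 (min_le_right _ _)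
    set τ : ℝ := 1 - δ / (x - w) with hτ
    have hxw : x - w = x / 2 := by rw [hw]; ring
    have hxw0 : 0 < x - w := by rw [hxw]; positivity
    have hτ0 : 0 ≤ τ := by
      rw [hτ, sub_nonneg, div_le_one hxw0]
      rw [hxw]
      linarith
    have hτ1 : τ ≤ 1 := by
      rw [hτ]
      have : 0 < δ / (x - w) := div_pos hδ0 hxw0
      linarith
    have key := scalar_concave g hg_pos hg_comb w x τ hw0 hx hτ0 hτ1
    have harg : (1 - τ) * w + τ * x = x - δ := by
      rw [hτ, hxw, hw]
      field_simp
      ring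
    rw [harg] at key
    -- g (x - δ) ≥ g x - (1 - τ) * K
    have h1 : (1 - τ) = δ / (x - w) := by rw [hτ]; ring
    have h2 : (1 - τ) * K ≤ ε := by
      rw [h1, hxw]
      rw [div_mul_eq_mul_div, div_le_iff₀ (by positivity : (0:ℝ) < x/2)]
      have h3 : δ * (K + 1) ≤ ε * (x/2) := by
        calc δ * (K + 1) ≤ (ε * (x/2) / (K + 1)) * (K + 1) := by
              apply mul_le_mul_of_nonneg_right hδK (by positivity)
          _ = ε * (x/2) := div_mul_cancel₀ _ (by positivity)
      nlinarith
    -- combine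
    have h4 : (1 - τ) * g w + τ * g x = g x - (1 - τ) * K := by rw [hK]; ring
    rw [h4] at key
    linarith


lemma lle_refl (X : Matrix ι ι ℂ) : LoewnerLE X X := by
  unfold LoewnerLE
  rw [sub_self]
  exact Matrix.PosSemidef.zero

/-- scalar matrices -/
lemma ed_scalar (x : ℝ) : IsED (x • (1 : Matrix ι ι ℂ)) 1 (fun _ => x) :=
  ed_congr ((ed_one_of_unitary (one_mem _)).smul x) (fun i => by simp)

lemma cfc_scalar (g : ℝ → ℝ) (x : ℝ) :
    cfc g (x • (1 : Matrix ι ι ℂ)) = g x • (1 : Matrix ι ι ℂ) :=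
  ed_eq ((ed_scalar x).cfc g) (ed_scalar (g x)) (fun _ => rfl)

lemma pd_scalar {x : ℝ} (hx : 0 < x) : (x • (1 : Matrix ι ι ℂ)).PosDef :=
  ed_pd_of_pos (ed_scalar x) (fun _ => hx)

lemma lle_scalar_iff [Nonempty ι] {x y : ℝ} :
    LoewnerLE (x • (1 : Matrix ι ι ℂ)) (y • (1 : Matrix ι ι ℂ)) ↔ x ≤ y := by
  unfold LoewnerLE
  rw [ed_psd_iff ((ed_scalar y).sub (ed_scalar x))]
  constructor
  · intro h
    have := h (Classical.arbitrary ι)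
    simp only [Pi.sub_apply] at this
    linarith
  · intro h i
    simp only [Pi.sub_apply]
    linarith

/-- the ε-approximation order limit -/
lemma lle_of_forall_eps {X Y : Matrix ι ι ℂ}
    (h : ∀ ε : ℝ, 0 < ε → LoewnerLE X (Y + ε • 1)) : LoewnerLE X Y := by
  unfold LoewnerLE at *
  have h1 := h 1 one_pos
  refine Matrix.PosSemidef.of_dotProduct_mulVec_nonneg ?_ ?_
  · have e1 : Y - X = (Y + (1:ℝ) • 1 - X) - (1:ℝ) • (1 : Matrix ι ι ℂ) := by abel
    rw [e1]
    refine h1.isHermitian.sub ?_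
    rw [one_smul]
    exact Matrix.isHermitian_one
  · intro x
    set q : ℂ := dotProduct (star x) ((Y - X) *ᵥ x) with hq
    set s : ℂ := dotProduct (star x) x with hs
    have hs0 : 0 ≤ s := by
      have := (Matrix.PosSemidef.one (n := ι) (R := ℂ)).dotProduct_mulVec_nonneg x
      rwa [one_mulVec] at this
    have hkey : ∀ ε : ℝ, 0 < ε → 0 ≤ q + (ε : ℂ) * s := by
      intro ε hε
      have h2 := (h ε hε).dotProduct_mulVec_nonneg x
      have e2 : Y + ε • 1 - X = (Y - X) + ε • (1 : Matrix ι ι ℂ) := by abel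
      rw [e2, add_mulVec, dotProduct_add] at h2
      have e3 : dotProduct (star x) ((ε • (1 : Matrix ι ι ℂ)) *ᵥ x) = (ε : ℂ) * s := by
        rw [Matrix.smul_mulVec, one_mulVec, dotProduct_smul, hs]
        simp [Complex.real_smul]
      rwa [e3] at h2
    -- extract real and imaginary parts
    rw [Complex.le_def] at hs0 ⊢
    simp only [Complex.zero_re, Complex.zero_im] at hs0 ⊢
    obtain ⟨hsre, hsim⟩ := hs0
    have h1' := hkey 1 one_pos
    have h2' := hkey 2 two_pos
    rw [Complex.le_def] at h1' h2'
    simp only [Complex.zero_re, Complex.zero_im, Complex.add_re, Complex.add_im,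
      Complex.mul_re, Complex.mul_im, Complex.ofReal_re, Complex.ofReal_im] at h1' h2'
    constructor
    · -- real part
      apply le_of_forall_pos_le_add
      intro ε hε
      have hε' : 0 < ε / (s.re + 1) := by positivity
      have h3 := hkey (ε / (s.re + 1)) hε'
      rw [Complex.le_def] at h3
      simp only [Complex.zero_re, Complex.add_re, Complex.mul_re, Complex.ofReal_re,
        Complex.ofReal_im] at h3
      have h4 : (ε / (s.re + 1)) * s.re ≤ ε := by
        rw [div_mul_eq_mul_div, div_le_iff₀ (by linarith)]
        nlinarith
      have h5 := h3.1
      rw [← hsim] at h5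
      simp at h5
      nlinarith [h5]
    · -- imaginary part
      have i1 := h1'.2
      have i2 := h2'.2
      rw [← hsim] at i1 i2
      simp at i1 i2
      linarith
  
/-- one-sided δ-ε approximation: `cfc g A ≼ cfc g (A - δ•1) + ε•1`. -/
lemma stepD_eps (g : ℝ → ℝ) {A U : Matrix ι ι ℂ} {d : ι → ℝ} (hed : IsED A U d)
    (δ ε : ℝ) (hdiff : ∀ i, g (d i) - g (d i - δ) ≤ ε) :
    LoewnerLE (cfc g A) (cfc g (A - δ • 1) + ε • 1) := by
  unfold LoewnerLE
  have hδ1 : IsED (δ • (1 : Matrix ι ι ℂ)) U (fun _ => δ) :=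
    ed_congr ((ed_one_of_unitary hed.1).smul δ) (fun i => by simp)
  have hε1 : IsED (ε • (1 : Matrix ι ι ℂ)) U (fun _ => ε) :=
    ed_congr ((ed_one_of_unitary hed.1).smul ε) (fun i => by simp)
  have hAδ : IsED (A - δ • 1) U (d - fun _ => δ) := hed.sub hδ1
  have hfin : IsED (cfc g (A - δ • 1) + ε • 1 - cfc g A) U
      ((g ∘ (d - fun _ => δ)) + (fun _ => ε) - g ∘ d) :=
    ((hAδ.cfc g).add hε1).sub (hed.cfc g)
  rw [ed_psd_iff hfin]
  intro i
  simp only [Pi.sub_apply, Pi.add_apply, Function.comp_apply]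
  have := hdiff i
  linarith

section main

theorem opMonotoneDecreasing_harmonic_mean' (f : ℝ → ℝ)
    (hf_pos : ∀ x : ℝ, 0 < x → 0 < f x)
    (hf_dec : ∀ (m : ℕ) (A B : Matrix (Fin m) (Fin m) ℂ),
      A.PosDef → B.PosDef → LoewnerLE A B → LoewnerLE (cfc f B) (cfc f A))
    (n : ℕ) (A B : Matrix (Fin n) (Fin n) ℂ) (hA : A.PosDef) (hB : B.PosDef)
    (t : ℝ) (ht0 : 0 ≤ t) (ht1 : t ≤ 1) :
    LoewnerLE (cfc f ((1 - t) • A + t • B))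
      (((1 - t) • (cfc f A)⁻¹ + t • (cfc f B)⁻¹)⁻¹) := by
  classical
  set g : ℝ → ℝ := fun x => (f x)⁻¹ with hgdef
  have hg_pos : ∀ x : ℝ, 0 < x → 0 < g x := fun x hx => inv_pos.mpr (hf_pos x hx)
  -- scalar monotonicity of g
  have hg_mono : ∀ x y : ℝ, 0 < x → x ≤ y → g x ≤ g y := by
    intro x y hx hxy
    have hy : 0 < y := lt_of_lt_of_le hx hxy
    have h1 : LoewnerLE (x • (1 : Matrix (Fin 1) (Fin 1) ℂ)) (y • 1) :=
      lle_scalar_iff.mpr hxy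
    have h2 := gmono f hf_pos (hf_dec 1) (Equiv.refl (Fin 1)) _ _
      (pd_scalar hx) (pd_scalar hy) h1
    rw [cfc_scalar, cfc_scalar] at h2
    exact lle_scalar_iff.mp h2
  -- scalar combination inequality for g
  have hg_comb : ∀ u v δ s : ℝ, 0 < u → 0 < v → 0 < δ → 0 ≤ s → s ≤ 1 →
      (1 - s) * g u + s * g v ≤ g ((1 - s) * u + s * v + δ) := by
    intro u v δ s hu hv hδ hs0 hs1
    set Am : Matrix (Fin 1) (Fin 1) ℂ := (u + δ) • 1 with hAm
    set Bm : Matrix (Fin 1) (Fin 1) ℂ := (v + δ) • 1 with hBm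
    have eA : Am - δ • 1 = u • (1 : Matrix (Fin 1) (Fin 1) ℂ) := by
      rw [hAm]; module
    have eB : Bm - δ • 1 = v • (1 : Matrix (Fin 1) (Fin 1) ℂ) := by
      rw [hBm]; module
    have hAmpd : Am.PosDef := pd_scalar (by linarith)
    have hBmpd : Bm.PosDef := pd_scalar (by linarith)
    have hAδpd : (Am - δ • 1).PosDef := by rw [eA]; exact pd_scalar hu
    have hBδpd : (Bm - δ • 1).PosDef := by rw [eB]; exact pd_scalar hv
    have key := stepB f hf_pos hf_dec Am Bm hAmpd hBmpd s δ hs0 hs1 hδ hAδpd hBδpd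
    rw [eA, eB, cfc_scalar, cfc_scalar] at key
    have eM : (1 - s) • Am + s • Bm
        = ((1 - s) * u + s * v + δ) • (1 : Matrix (Fin 1) (Fin 1) ℂ) := by
      rw [hAm, hBm]; module
    rw [eM, cfc_scalar] at key
    have eL : (1 - s) • (g u • (1 : Matrix (Fin 1) (Fin 1) ℂ)) + s • (g v • 1)
        = ((1 - s) * g u + s * g v) • (1 : Matrix (Fin 1) (Fin 1) ℂ) := by module
    rw [eL] at key
    exact lle_scalar_iff.mp key
  -- setup
  set M : Matrix (Fin n) (Fin n) ℂ := (1 - t) • A + t • B with hMdef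
  have hMpd : M.PosDef := pd_combo hA hB ht0 ht1
  obtain ⟨UA, dA, hedA, hdA⟩ : ∃ U d, IsED A U d ∧ ∀ i, 0 < d i :=
    ⟨_, _, isED_of_isHermitian hA.isHermitian, hA.eigenvalues_pos⟩
  obtain ⟨UB, dB, hedB, hdB⟩ : ∃ U d, IsED B U d ∧ ∀ i, 0 < d i :=
    ⟨_, _, isED_of_isHermitian hB.isHermitian, hB.eigenvalues_pos⟩
  obtain ⟨UM, dM, hedM, hdM⟩ : ∃ U d, IsED M U d ∧ ∀ i, 0 < d i :=
    ⟨_, _, isED_of_isHermitian hMpd.isHermitian, hMpd.eigenvalues_pos⟩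
  set P : Matrix (Fin n) (Fin n) ℂ := (1 - t) • cfc g A + t • cfc g B with hPdef
  -- the key limit inequality
  have hPM : LoewnerLE P (cfc g M) := by
    apply lle_of_forall_eps
    intro ε hε
    -- choose δ uniformly small
    have hchoice : ∀ x : ℝ, 0 < x →
        ∃ δ₀ : ℝ, 0 < δ₀ ∧ δ₀ < x ∧ ∀ δ : ℝ, 0 < δ → δ ≤ δ₀ → g x - g (x - δ) ≤ ε :=
      fun x hx => scalar_left g hg_pos hg_mono hg_comb x ε hx hε
    set DA : Fin n → ℝ := fun i => Classical.choose (hchoice (dA i) (hdA i)) with hDA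
    set DB : Fin n → ℝ := fun i => Classical.choose (hchoice (dB i) (hdB i)) with hDB
    have hDAspec : ∀ i, 0 < DA i ∧ DA i < dA i ∧
        ∀ δ : ℝ, 0 < δ → δ ≤ DA i → g (dA i) - g (dA i - δ) ≤ ε :=
      fun i => Classical.choose_spec (hchoice (dA i) (hdA i))
    have hDBspec : ∀ i, 0 < DB i ∧ DB i < dB i ∧
        ∀ δ : ℝ, 0 < δ → δ ≤ DB i → g (dB i) - g (dB i - δ) ≤ ε :=
      fun i => Classical.choose_spec (hchoice (dB i) (hdB i))
    set sfin : Finset ℝ := insert 1 ((Finset.univ.image DA) ∪ (Finset.univ.image DB))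
      with hsfin
    have hne : sfin.Nonempty := ⟨1, Finset.mem_insert_self _ _⟩
    set δ : ℝ := sfin.min' hne with hδdef
    have hδmem := sfin.min'_mem hne
    have hδpos : 0 < δ := by
      rw [hδdef]
      have : ∀ y ∈ sfin, 0 < y := by
        intro y hy
        rw [hsfin] at hy
        rcases Finset.mem_insert.mp hy with h | h
        · rw [h]; norm_num
        · rcases Finset.mem_union.mp h with h | h
          · obtain ⟨i, _, rfl⟩ := Finset.mem_image.mp h
            exact (hDAspec i).1
          · obtain ⟨i, _, rfl⟩ := Finset.mem_image.mp h
            exact (hDBspec i).1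
      exact this _ hδmem
    have hδA : ∀ i, δ ≤ DA i := by
      intro i
      apply Finset.min'_le
      rw [hsfin]
      exact Finset.mem_insert_of_mem (Finset.mem_union_left _
        (Finset.mem_image_of_mem DA (Finset.mem_univ i)))
    have hδB : ∀ i, δ ≤ DB i := by
      intro i
      apply Finset.min'_le
      rw [hsfin]
      exact Finset.mem_insert_of_mem (Finset.mem_union_right _
        (Finset.mem_image_of_mem DB (Finset.mem_univ i)))
    -- A - δ•1 and B - δ•1 are positive definite
    have hδ1A : IsED (δ • (1 : Matrix (Fin n) (Fin n) ℂ)) UA (fun _ => δ) :=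
      ed_congr ((ed_one_of_unitary hedA.1).smul δ) (fun i => by simp)
    have hδ1B : IsED (δ • (1 : Matrix (Fin n) (Fin n) ℂ)) UB (fun _ => δ) :=
      ed_congr ((ed_one_of_unitary hedB.1).smul δ) (fun i => by simp)
    have hAδpd : (A - δ • 1).PosDef :=
      ed_pd_of_pos (hedA.sub hδ1A) (fun i => by
        have h1 := (hDAspec i).2.1
        have h2 := hδA i
        simp only [Pi.sub_apply]
        linarith)
    have hBδpd : (B - δ • 1).PosDef :=
      ed_pd_of_pos (hedB.sub hδ1B) (fun i => by
        have h1 := (hDBspec i).2.1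
        have h2 := hδB i
        simp only [Pi.sub_apply]
        linarith)
    -- main dilation inequality
    have hmain := stepB f hf_pos hf_dec A B hA hB t δ ht0 ht1 hδpos hAδpd hBδpd
    -- approximation inequalities
    have happroxA : LoewnerLE (cfc g A) (cfc g (A - δ • 1) + ε • 1) :=
      stepD_eps g hedA δ ε (fun i => (hDAspec i).2.2 δ hδpos (hδA i))
    have happroxB : LoewnerLE (cfc g B) (cfc g (B - δ • 1) + ε • 1) :=
      stepD_eps g hedB δ ε (fun i => (hDBspec i).2.2 δ hδpos (hδB i))
    -- combine
    have hcomb : LoewnerLE P ((1 - t) • (cfc g (A - δ • 1) + ε • 1)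
        + t • (cfc g (B - δ • 1) + ε • 1)) := by
      rw [hPdef]
      exact lle_add (lle_smul happroxA (by linarith)) (lle_smul happroxB ht0)
    have halg : (1 - t) • (cfc g (A - δ • 1) + ε • 1) + t • (cfc g (B - δ • 1) + ε • 1)
        = ((1 - t) • cfc g (A - δ • 1) + t • cfc g (B - δ • 1)) + ε • 1 := by
      module
    rw [halg] at hcomb
    refine lle_trans hcomb ?_
    exact lle_add hmain (lle_refl _)
  -- P and cfc g M are positive definite
  have hgApd : (cfc g A).PosDef := ed_pd_of_pos (hedA.cfc g) (fun i => hg_pos _ (hdA i))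
  have hgBpd : (cfc g B).PosDef := ed_pd_of_pos (hedB.cfc g) (fun i => hg_pos _ (hdB i))
  have hgMpd : (cfc g M).PosDef := ed_pd_of_pos (hedM.cfc g) (fun i => hg_pos _ (hdM i))
  have hPpd : P.PosDef := pd_combo hgApd hgBpd ht0 ht1
  -- invert
  have hfinal := inv_antitone hPpd hgMpd hPM
  -- identify the two sides
  have hMid : (cfc g M)⁻¹ = cfc f M := by
    refine ed_eq (ed_inv (hedM.cfc g) (fun i => ?_)) (hedM.cfc f) (fun i => ?_)
    · exact ne_of_gt (hg_pos _ (hdM i))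
    · show (g (dM i))⁻¹ = f (dM i)
      rw [hgdef]
      exact inv_inv _
  have hAinv : (cfc f A)⁻¹ = cfc g A :=
    ed_eq (ed_inv (hedA.cfc f) (fun i => ne_of_gt (hf_pos _ (hdA i)))) (hedA.cfc g)
      (fun i => rfl)
  have hBinv : (cfc f B)⁻¹ = cfc g B :=
    ed_eq (ed_inv (hedB.cfc f) (fun i => ne_of_gt (hf_pos _ (hdB i)))) (hedB.cfc g)
      (fun i => rfl)
  rw [hMid] at hfinal
  rw [hAinv, hBinv, ← hPdef]
  exact hfinal

end main


end OMD

end OMDHelpers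

theorem opMonotoneDecreasing_harmonic_mean (f : ℝ → ℝ)
    (hf_pos : ∀ x : ℝ, 0 < x → 0 < f x)
    (hf_dec : ∀ (m : ℕ) (A B : Matrix (Fin m) (Fin m) ℂ),
      A.PosDef → B.PosDef → LoewnerLE A B → LoewnerLE (cfc f B) (cfc f A))
    (n : ℕ) (A B : Matrix (Fin n) (Fin n) ℂ) (hA : A.PosDef) (hB : B.PosDef)
    (t : ℝ) (ht0 : 0 ≤ t) (ht1 : t ≤ 1) :
    LoewnerLE (cfc f ((1 - t) • A + t • B))
      (((1 - t) • (cfc f A)⁻¹ + t • (cfc f B)⁻¹)⁻¹) := by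
  exact OMD.opMonotoneDecreasing_harmonic_mean' f hf_pos hf_dec n A B hA hB t ht0 ht1
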